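/- Let y₀ ∈ (0,1) and let the sequences (xᵢ)ᵢ≥₀, (yᵢ)ᵢ≥₀, (aᵢ)ᵢ≥₁, (bᵢ)ᵢ≥₁ be defined by the strip recursion, with deviations αᵢ = aᵢ − (2i−1) and βᵢ = bᵢ − (2i−1). Assume that for every i ≥ 1 the denominator Dᵢ is nonzero and yᵢ ∉ {1, −1}. Then for every i ≥ 1: αᵢ + βᵢ = 2·y₀²/(1 − y₀²) + 4·( y₁²/(1 − y₁²) + ⋯ + y_{i−1}²/(1 − y_{i−1}²) ), where for i = 1 the sum over j = 1,…,i−1 is empty. -/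
import Mathlib


noncomputable section

/-- The denominator `Dᵢ = (aᵢ − x_{i−1})(1 + y_{i−1}) + (bᵢ − x_{i−1})(1 − y_{i−1})`. -/
def StripDenom (x y a b : ℕ → ℝ) (i : ℕ) : ℝ :=
  (a i - x (i - 1)) * (1 + y (i - 1)) + (b i - x (i - 1)) * (1 - y (i - 1))

/-- The strip recursion: `x₀ = 0`, `a₁ = 1/(1 − y₀)`, `b₁ = 1/(1 + y₀)`, and for `i ≥ 1`:
`xᵢ = x_{i−1} + 2 − 2(aᵢ − bᵢ)y_{i−1}/Dᵢ`, `yᵢ = y_{i−1} − 4y_{i−1}/Dᵢ`,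
`a_{i+1} = aᵢ + 2/(1 − yᵢ)`, `b_{i+1} = bᵢ + 2/(1 + yᵢ)`. -/
def StripRec (x y a b : ℕ → ℝ) : Prop :=
  x 0 = 0 ∧ a 1 = 1 / (1 - y 0) ∧ b 1 = 1 / (1 + y 0) ∧
    ∀ i : ℕ, 1 ≤ i →
      x i = x (i - 1) + 2 - 2 * (a i - b i) * y (i - 1) / StripDenom x y a b i ∧
      y i = y (i - 1) - 4 * y (i - 1) / StripDenom x y a b i ∧
      a (i + 1) = a i + 2 / (1 - y i) ∧
      b (i + 1) = b i + 2 / (1 + y i)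

/-- For the deviations `αᵢ = aᵢ − (2i−1)`, `βᵢ = bᵢ − (2i−1)` one has
`αᵢ + βᵢ = 2y₀²/(1 − y₀²) + 4(y₁²/(1 − y₁²) + ⋯ + y_{i−1}²/(1 − y_{i−1}²))`. -/
theorem statement6 (x y a b : ℕ → ℝ) (hy0 : y 0 ∈ Set.Ioo (0 : ℝ) 1)
    (hrec : StripRec x y a b)
    (hD : ∀ i : ℕ, 1 ≤ i → StripDenom x y a b i ≠ 0)
    (hy : ∀ i : ℕ, 1 ≤ i → y i ≠ 1 ∧ y i ≠ -1)
    (α β : ℕ → ℝ)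
    (hα : ∀ i : ℕ, 1 ≤ i → α i = a i - (2 * (i : ℝ) - 1))
    (hβ : ∀ i : ℕ, 1 ≤ i → β i = b i - (2 * (i : ℝ) - 1)) :
    ∀ i : ℕ, 1 ≤ i →
      α i + β i = 2 * (y 0) ^ 2 / (1 - (y 0) ^ 2) +
        4 * ∑ j ∈ Finset.Ico 1 i, (y j) ^ 2 / (1 - (y j) ^ 2) := by
  obtain ⟨hx0, ha1, hb1, hstep⟩ := hrec
  obtain ⟨hy0p, hy0lt⟩ := hy0
  intro i hi
  induction i, hi using Nat.le_induction with
  | base =>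
    rw [hα 1 le_rfl, hβ 1 le_rfl, ha1, hb1]
    have h1 : (1 : ℝ) - y 0 ≠ 0 := by linarith
    have h2 : (1 : ℝ) + y 0 ≠ 0 := by linarith
    have h3 : (1 : ℝ) - (y 0) ^ 2 ≠ 0 := by nlinarith
    simp only [Finset.Ico_self, Finset.sum_empty, mul_zero, add_zero]
    push_cast
    field_simp
    ring
  | succ n hn ih =>
    have hyn := hy n hn
    have h1 : (1 : ℝ) - y n ≠ 0 := sub_ne_zero.mpr (Ne.symm hyn.1)
    have h2 : (1 : ℝ) + y n ≠ 0 := by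
      intro h; apply hyn.2; linarith
    have h3 : (1 : ℝ) - (y n) ^ 2 ≠ 0 := by
      have : (1 : ℝ) - (y n) ^ 2 = (1 - y n) * (1 + y n) := by ring
      rw [this]; exact mul_ne_zero h1 h2
    obtain ⟨_, _, han, hbn⟩ := hstep n hn
    rw [hα (n + 1) (by omega), hβ (n + 1) (by omega), han, hbn]
    rw [hα n hn, hβ n hn] at ih
    rw [Finset.sum_Ico_succ_top hn, mul_add]
    push_cast
    have key : 2 / (1 - y n) + 2 / (1 + y n) - 4 = 4 * ((y n) ^ 2 / (1 - (y n) ^ 2)) := by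
      have h3' : (1 : ℝ) - (y n) ^ 2 = (1 - y n) * (1 + y n) := by ring
      field_simp [h3']
      ring
    linarith [ih]
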